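/- Let A, B, a, b be positive integers with a ≤ A, b ≤ B, and let G = ℤ_A × ℤ_B. If the cube Q_{a,b} = [a] × [b] has a spectrum Λ ⊆ G, then a divides A, b divides B, and Q*_{a,b} + Λ tiles G, where Q*_{a,b} = [A/a] × [B/b] is the dual cube. -/

import Mathlib

/-- The cube `[a] × [b]` in `ℤ_A × ℤ_B`. -/
def cube2 (A B a b : ℕ) : Finset (ZMod A × ZMod B) :=
  Finset.image (fun v : Fin a × Fin b => (((v.1 : ℕ) : ZMod A), ((v.2 : ℕ) : ZMod B)))
    Finset.univ

/-- The character `e_λ(x) = exp(2πi(λ₁x₁/A + λ₂x₂/B))` on `ℤ_A × ℤ_B`. -/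
noncomputable def e2 (A B : ℕ) (lam x : ZMod A × ZMod B) : ℂ :=
  Complex.exp (2 * (Real.pi : ℂ) * Complex.I *
    ((lam.1.val : ℂ) * (x.1.val : ℂ) / (A : ℂ) + (lam.2.val : ℂ) * (x.2.val : ℂ) / (B : ℂ)))

/-- `Λ` is a spectrum of `E ⊆ ℤ_A × ℤ_B`. -/
def IsSpectrum2 (A B : ℕ) (E L : Finset (ZMod A × ZMod B)) : Prop :=
  L.card = E.card ∧
  ∀ l ∈ L, ∀ m ∈ L, l ≠ m →
    ∑ x ∈ E, e2 A B l x * (starRingEnd ℂ) (e2 A B m x) = 0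

/-- `E` tiles the abelian group `G` with translate set `T`. -/
def Tiles {G : Type*} [AddCommGroup G] (E T : Finset G) : Prop :=
  ∀ x : G, ∃! p : G × G, p.1 ∈ E ∧ p.2 ∈ T ∧ x = p.1 + p.2

/- ### Auxiliary lemmas -/

lemma exp_eq_one_iff_dvd {N : ℕ} (hN : 0 < N) (m : ℤ) :
    Complex.exp (2*(Real.pi:ℂ)*Complex.I*m/N) = 1 ↔ (N:ℤ) ∣ m := by
  have hNz : (N:ℂ) ≠ 0 := Nat.cast_ne_zero.2 hN.ne'
  have hπ : (Real.pi:ℂ) ≠ 0 := by exact_mod_cast Real.pi_ne_zero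
  have h2 : (2:ℂ)*(Real.pi:ℂ)*Complex.I ≠ 0 := by
    simp [hπ, Complex.I_ne_zero]
  constructor
  · intro he
    rw [Complex.exp_eq_one_iff] at he
    obtain ⟨k, hk⟩ := he
    have hm : (m:ℂ) = (k:ℂ)*N := by
      have hk' : (2*(Real.pi:ℂ)*Complex.I) * m = (2*(Real.pi:ℂ)*Complex.I) * ((k:ℂ)*N) := by
        field_simp at hk
        linear_combination (2*(Real.pi:ℂ)*Complex.I) * hk
      have := mul_left_cancel₀ h2 hk'
      exact this
    have : m = k * N := by exact_mod_cast hm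
    exact ⟨k, by rw [this]; ring⟩
  · rintro ⟨t, rfl⟩
    have : 2*(Real.pi:ℂ)*Complex.I*((N:ℤ)*t : ℤ)/N = (t:ℂ) * (2*(Real.pi:ℂ)*Complex.I) := by
      push_cast
      field_simp
    rw [this, Complex.exp_int_mul_two_pi_mul_I]

lemma geom_exp_zero {N n : ℕ} (hN : 0 < N) (hn : 0 < n) (d : ℤ)
    (h : ∑ j ∈ Finset.range n, Complex.exp (2*(Real.pi:ℂ)*Complex.I*d/N)^j = 0) :
    (N:ℤ) ∣ d*n ∧ ¬ (N:ℤ) ∣ d := by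
  set z : ℂ := Complex.exp (2*(Real.pi:ℂ)*Complex.I*d/N) with hz
  have hz1 : z ≠ 1 := by
    intro hz1
    rw [hz1] at h
    simp at h
    omega
  have hnd : ¬ (N:ℤ) ∣ d := fun hdvd => hz1 ((exp_eq_one_iff_dvd hN d).2 hdvd)
  refine ⟨?_, hnd⟩
  rw [geom_sum_eq hz1, div_eq_zero_iff] at h
  rcases h with h | h
  · have hzn : z ^ n = 1 := by linear_combination h
    rw [hz, ← Complex.exp_nat_mul] at hzn
    have : (n:ℂ) * (2*(Real.pi:ℂ)*Complex.I*d/N) = 2*(Real.pi:ℂ)*Complex.I*((d*n : ℤ):ℂ)/N := by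
      push_cast; ring
    rw [this] at hzn
    exact (exp_eq_one_iff_dvd hN _).1 hzn
  · exact absurd (by linear_combination h) hz1

lemma zmod_dvd_iff {N : ℕ} [NeZero N] (c : ℕ) (x y : ZMod N) :
    (N:ℤ) ∣ ((x.val:ℤ) - y.val) * c ↔ (c : ZMod N) * (x - y) = 0 := by
  rw [← ZMod.intCast_zmod_eq_zero_iff_dvd]
  push_cast [ZMod.natCast_val, ZMod.cast_id]
  constructor <;> intro h <;> linear_combination h

lemma zmod_dvd_iff' {N : ℕ} [NeZero N] (x y : ZMod N) :
    (N:ℤ) ∣ ((x.val:ℤ) - y.val) ↔ x = y := by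
  rw [← ZMod.intCast_zmod_eq_zero_iff_dvd]
  push_cast [ZMod.natCast_val, ZMod.cast_id]
  exact sub_eq_zero

lemma torsion_mem_iff {N : ℕ} [NeZero N] (c : ℕ) (hc : 0 < c) (d : ZMod N) :
    (c : ZMod N) * d = 0 ↔ (N / Nat.gcd c N) ∣ d.val := by
  have hN : 0 < N := Nat.pos_of_ne_zero (NeZero.ne N)
  have hg : 0 < Nat.gcd c N := Nat.gcd_pos_of_pos_left N hc
  set g := Nat.gcd c N with hgdef
  have hcg : g ∣ c := Nat.gcd_dvd_left c N
  have hNg : g ∣ N := Nat.gcd_dvd_right c N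
  have h1 : (c : ZMod N) * d = ((c * d.val : ℕ) : ZMod N) := by
    push_cast [ZMod.natCast_val, ZMod.cast_id]
    rfl
  rw [h1, ZMod.natCast_eq_zero_iff]
  have hco : Nat.Coprime (N / g) (c / g) := (Nat.coprime_div_gcd_div_gcd hg).symm
  constructor
  · intro h
    have h2 : (N/g)*g ∣ ((c/g) * d.val) * g := by
      rw [Nat.div_mul_cancel hNg, mul_right_comm, Nat.div_mul_cancel hcg]
      exact h
    have h3 : (N / g) ∣ (c / g) * d.val := (Nat.mul_dvd_mul_iff_right hg).1 h2
    rw [mul_comm] at h3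
    exact hco.dvd_of_dvd_mul_right h3
  · rintro ⟨t, ht⟩
    refine ⟨(c/g) * t, ?_⟩
    rw [ht, ← mul_assoc]
    have : c * (N/g) = N * (c/g) := by
      conv_lhs => rw [← Nat.div_mul_cancel hcg]
      rw [mul_assoc, Nat.mul_div_cancel' hNg, mul_comm]
    rw [this, mul_assoc]

lemma torsion_card {N : ℕ} [NeZero N] (c : ℕ) (hc : 0 < c) :
    (Finset.univ.filter fun d : ZMod N => (c : ZMod N) * d = 0).card = Nat.gcd c N := by
  have hN : 0 < N := Nat.pos_of_ne_zero (NeZero.ne N)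
  have hg : 0 < Nat.gcd c N := Nat.gcd_pos_of_pos_left N hc
  set g := Nat.gcd c N with hgdef
  have hNg : g ∣ N := Nat.gcd_dvd_right c N
  have hq : 0 < N / g := Nat.div_pos (Nat.le_of_dvd hN hNg) hg
  have himg : (Finset.univ.filter fun d : ZMod N => (c : ZMod N) * d = 0)
      = Finset.image (fun k : Fin g => ((k * (N/g) : ℕ) : ZMod N)) Finset.univ := by
    ext d
    simp only [Finset.mem_filter, Finset.mem_univ, true_and, Finset.mem_image,
      torsion_mem_iff c hc]
    constructor
    · rintro ⟨t, ht⟩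
      have htg : t < g := by
        have hv := d.val_lt
        rw [ht] at hv
        by_contra hle
        push_neg at hle
        have hge : N ≤ N / g * t := by
          calc N = g * (N/g) := (Nat.mul_div_cancel' hNg).symm
          _ ≤ t * (N/g) := Nat.mul_le_mul_right _ hle
          _ = N/g * t := mul_comm _ _
        exact absurd hv (not_lt.2 hge)
      refine ⟨⟨t, htg⟩, ?_⟩
      have : (t * (N/g)) = d.val := by rw [ht, mul_comm]
      rw [this, ZMod.natCast_val, ZMod.cast_id]
    · rintro ⟨k, hk⟩
      refine ⟨k, ?_⟩
      have hlt : (k : ℕ) * (N/g) < N := by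
        calc (k:ℕ) * (N/g) < g * (N/g) := (Nat.mul_lt_mul_right hq).2 k.isLt
        _ = N := Nat.mul_div_cancel' hNg
      rw [← hk, ZMod.val_cast_of_lt hlt, mul_comm]
  rw [himg, Finset.card_image_of_injective _ ?inj, Finset.card_univ, Fintype.card_fin]
  intro k1 k2 hk
  have hlt : ∀ k : Fin g, (k : ℕ) * (N/g) < N := by
    intro k
    calc (k:ℕ) * (N/g) < g * (N/g) := (Nat.mul_lt_mul_right hq).2 k.isLt
    _ = N := Nat.mul_div_cancel' hNg
  have := congrArg ZMod.val hk
  rw [ZMod.val_cast_of_lt (hlt k1), ZMod.val_cast_of_lt (hlt k2)] at this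
  have : (k1:ℕ) = k2 := Nat.eq_of_mul_eq_mul_right hq this
  exact Fin.ext this

lemma card_le_torsion {N : ℕ} [NeZero N] (c : ℕ) (S : Finset (ZMod N))
    (h : ∀ x ∈ S, ∀ y ∈ S, (c : ZMod N) * (x - y) = 0) :
    S.card ≤ (Finset.univ.filter fun d : ZMod N => (c : ZMod N) * d = 0).card := by
  rcases S.eq_empty_or_nonempty with rfl | ⟨x0, hx0⟩
  · simp
  · apply Finset.card_le_card_of_injOn (fun x => x - x0)
    · intro x hx
      simp only [Finset.mem_filter, Finset.mem_univ, true_and]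
      simpa using h x hx x0 hx0
    · intro x _ y _ hxy
      simpa [sub_left_inj] using hxy

lemma spectrum_card_bound {A B : ℕ} [NeZero A] [NeZero B] (a b : ℕ)
    (L : Finset (ZMod A × ZMod B))
    (hC : ∀ l ∈ L, ∀ m ∈ L, l ≠ m →
      ((a : ZMod A) * (l.1 - m.1) = 0 ∧ l.1 ≠ m.1) ∨
      ((b : ZMod B) * (l.2 - m.2) = 0 ∧ l.2 ≠ m.2)) :
    L.card ≤ (Finset.univ.filter fun d : ZMod A => (a : ZMod A) * d = 0).card *
      (Finset.univ.filter fun d : ZMod B => (b : ZMod B) * d = 0).card := by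
  set T1c := (Finset.univ.filter fun d : ZMod A => (a : ZMod A) * d = 0).card with hT1
  set T2c := (Finset.univ.filter fun d : ZMod B => (b : ZMod B) * d = 0).card with hT2
  by_cases hcase : ∀ l ∈ L, ∀ m ∈ L, (a : ZMod A) * (l.1 - m.1) = 0
  · have himg : (L.image Prod.fst).card ≤ T1c := by
      apply card_le_torsion
      intro x hx y hy
      obtain ⟨l, hl, rfl⟩ := Finset.mem_image.1 hx
      obtain ⟨m, hm, rfl⟩ := Finset.mem_image.1 hy
      exact hcase l hl m hm
    have hfib : ∀ v ∈ L.image Prod.fst, (L.filter fun l => l.1 = v).card ≤ T2c := by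
      intro v _
      set F := L.filter fun l => l.1 = v with hF
      have hsnd : ∀ l ∈ F, ∀ m ∈ F, l ≠ m → (b : ZMod B) * (l.2 - m.2) = 0 ∧ l.2 ≠ m.2 := by
        intro l hl m hm hlm
        rw [hF, Finset.mem_filter] at hl hm
        rcases hC l hl.1 m hm.1 hlm with ⟨_, h1⟩ | h2
        · exact absurd (hl.2.trans hm.2.symm) h1
        · exact h2
      have hinj : Set.InjOn Prod.snd (F : Set (ZMod A × ZMod B)) := by
        intro l hl m hm h2
        by_contra hne
        exact (hsnd l (by simpa using hl) m (by simpa using hm) hne).2 h2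
      calc F.card = (F.image Prod.snd).card := (Finset.card_image_of_injOn hinj).symm
      _ ≤ T2c := by
          apply card_le_torsion
          intro x hx y hy
          obtain ⟨l, hl, rfl⟩ := Finset.mem_image.1 hx
          obtain ⟨m, hm, rfl⟩ := Finset.mem_image.1 hy
          by_cases hlm : l = m
          · simp [hlm]
          · exact (hsnd l hl m hm hlm).1
    calc L.card ≤ T2c * (L.image Prod.fst).card := Finset.card_le_mul_card_image L T2c hfib
    _ ≤ T2c * T1c := Nat.mul_le_mul_left _ himg
    _ = T1c * T2c := mul_comm _ _
  · push_neg at hcase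
    obtain ⟨α, hα, β, hβ, hab⟩ := hcase
    have key : ∀ l ∈ L, (b : ZMod B) * (l.2 - α.2) = 0 := by
      have hαβ : α ≠ β := by
        intro h; rw [h] at hab; simp at hab
      have hP2ab : (b : ZMod B) * (α.2 - β.2) = 0 := by
        rcases hC α hα β hβ hαβ with ⟨h1, _⟩ | ⟨h2, _⟩
        · exact absurd h1 hab
        · exact h2
      intro l hl
      by_cases hlα : l = α
      · simp [hlα]
      by_cases hPl : (a : ZMod A) * (l.1 - α.1) = 0
      · have hPlβ : ¬ (a : ZMod A) * (l.1 - β.1) = 0 := by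
          intro hcon
          apply hab
          have : α.1 - β.1 = (l.1 - β.1) - (l.1 - α.1) := by ring
          rw [this, mul_sub, hPl, hcon, sub_zero]
        have hlβ : l ≠ β := by
          intro h; rw [h] at hPlβ; simp at hPlβ
        have h2 : (b : ZMod B) * (l.2 - β.2) = 0 := by
          rcases hC l hl β hβ hlβ with ⟨h1, _⟩ | ⟨h2, _⟩
          · exact absurd h1 hPlβ
          · exact h2
        have : l.2 - α.2 = (l.2 - β.2) - (α.2 - β.2) := by ring
        rw [this, mul_sub, h2, hP2ab, sub_zero]
      · rcases hC l hl α hα hlα with ⟨h1, _⟩ | ⟨h2, _⟩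
        · exact absurd h1 hPl
        · exact h2
    have himg : (L.image Prod.snd).card ≤ T2c := by
      apply card_le_torsion
      intro x hx y hy
      obtain ⟨l, hl, rfl⟩ := Finset.mem_image.1 hx
      obtain ⟨m, hm, rfl⟩ := Finset.mem_image.1 hy
      have : l.2 - m.2 = (l.2 - α.2) - (m.2 - α.2) := by ring
      rw [this, mul_sub, key l hl, key m hm, sub_zero]
    have hfib : ∀ v ∈ L.image Prod.snd, (L.filter fun l => l.2 = v).card ≤ T1c := by
      intro v _
      set F := L.filter fun l => l.2 = v with hF
      have hfst : ∀ l ∈ F, ∀ m ∈ F, l ≠ m → (a : ZMod A) * (l.1 - m.1) = 0 ∧ l.1 ≠ m.1 := by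
        intro l hl m hm hlm
        rw [hF, Finset.mem_filter] at hl hm
        rcases hC l hl.1 m hm.1 hlm with h1 | ⟨_, h2⟩
        · exact h1
        · exact absurd (hl.2.trans hm.2.symm) h2
      have hinj : Set.InjOn Prod.fst (F : Set (ZMod A × ZMod B)) := by
        intro l hl m hm h2
        by_contra hne
        exact (hfst l (by simpa using hl) m (by simpa using hm) hne).2 h2
      calc F.card = (F.image Prod.fst).card := (Finset.card_image_of_injOn hinj).symm
      _ ≤ T1c := by
          apply card_le_torsion
          intro x hx y hy
          obtain ⟨l, hl, rfl⟩ := Finset.mem_image.1 hx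
          obtain ⟨m, hm, rfl⟩ := Finset.mem_image.1 hy
          by_cases hlm : l = m
          · simp [hlm]
          · exact (hfst l hl m hm hlm).1
    calc L.card ≤ T1c * (L.image Prod.snd).card := Finset.card_le_mul_card_image L T1c hfib
    _ ≤ T1c * T2c := Nat.mul_le_mul_left _ himg

lemma cube2_inj {A B a b : ℕ} [NeZero A] [NeZero B] (haA : a ≤ A) (hbB : b ≤ B) :
    Function.Injective (fun v : Fin a × Fin b =>
      (((v.1 : ℕ) : ZMod A), ((v.2 : ℕ) : ZMod B))) := by
  intro v w h
  simp only [Prod.mk.injEq] at h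
  have h1 := congrArg ZMod.val h.1
  have h2 := congrArg ZMod.val h.2
  rw [ZMod.val_cast_of_lt (lt_of_lt_of_le v.1.isLt haA),
    ZMod.val_cast_of_lt (lt_of_lt_of_le w.1.isLt haA)] at h1
  rw [ZMod.val_cast_of_lt (lt_of_lt_of_le v.2.isLt hbB),
    ZMod.val_cast_of_lt (lt_of_lt_of_le w.2.isLt hbB)] at h2
  exact Prod.ext (Fin.ext h1) (Fin.ext h2)

lemma cube2_card {A B a b : ℕ} [NeZero A] [NeZero B] (haA : a ≤ A) (hbB : b ≤ B) :
    (cube2 A B a b).card = a * b := by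
  rw [cube2, Finset.card_image_of_injective _ (cube2_inj haA hbB), Finset.card_univ]
  simp

lemma term_eq {A B : ℕ} [NeZero A] [NeZero B] (l m : ZMod A × ZMod B) (j k : ℕ)
    (hj : j < A) (hk : k < B) :
    e2 A B l (((j:ℕ) : ZMod A), ((k:ℕ) : ZMod B)) *
      (starRingEnd ℂ) (e2 A B m (((j:ℕ) : ZMod A), ((k:ℕ) : ZMod B))) =
    Complex.exp (2*(Real.pi:ℂ)*Complex.I*(((l.1.val:ℤ) - m.1.val : ℤ):ℂ)/A)^j *
      Complex.exp (2*(Real.pi:ℂ)*Complex.I*(((l.2.val:ℤ) - m.2.val : ℤ):ℂ)/B)^k := by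
  have hA : (A:ℂ) ≠ 0 := Nat.cast_ne_zero.2 (NeZero.ne A)
  have hB : (B:ℂ) ≠ 0 := Nat.cast_ne_zero.2 (NeZero.ne B)
  simp only [e2, ZMod.val_cast_of_lt hj, ZMod.val_cast_of_lt hk]
  rw [← Complex.exp_conj, ← Complex.exp_nat_mul, ← Complex.exp_nat_mul,
    ← Complex.exp_add, ← Complex.exp_add]
  congr 1
  simp only [map_mul, map_add, map_div₀, Complex.conj_I, Complex.conj_ofReal,
    map_natCast, map_ofNat]
  push_cast
  field_simp
  ring

lemma orth_cond {A B a b : ℕ} [NeZero A] [NeZero B]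
    (ha : 0 < a) (hb : 0 < b) (haA : a ≤ A) (hbB : b ≤ B)
    (l m : ZMod A × ZMod B)
    (h : ∑ x ∈ cube2 A B a b, e2 A B l x * (starRingEnd ℂ) (e2 A B m x) = 0) :
    ((a : ZMod A) * (l.1 - m.1) = 0 ∧ l.1 ≠ m.1) ∨
    ((b : ZMod B) * (l.2 - m.2) = 0 ∧ l.2 ≠ m.2) := by
  have hA : 0 < A := Nat.pos_of_ne_zero (NeZero.ne A)
  have hB : 0 < B := Nat.pos_of_ne_zero (NeZero.ne B)
  set z1 : ℂ := Complex.exp (2*(Real.pi:ℂ)*Complex.I*(((l.1.val:ℤ) - m.1.val : ℤ):ℂ)/A) with hz1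
  set z2 : ℂ := Complex.exp (2*(Real.pi:ℂ)*Complex.I*(((l.2.val:ℤ) - m.2.val : ℤ):ℂ)/B) with hz2
  have hfact : ∑ x ∈ cube2 A B a b, e2 A B l x * (starRingEnd ℂ) (e2 A B m x)
      = (∑ j ∈ Finset.range a, z1^j) * (∑ k ∈ Finset.range b, z2^k) := by
    rw [cube2, Finset.sum_image (fun v _ w _ hvw => cube2_inj haA hbB hvw)]
    rw [Finset.sum_mul_sum]
    rw [Fintype.sum_prod_type]
    rw [← Fin.sum_univ_eq_sum_range (fun j => ∑ k ∈ Finset.range b, z1^j * z2^k)]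
    apply Finset.sum_congr rfl
    intro j _
    rw [← Fin.sum_univ_eq_sum_range (fun k => z1^(j:ℕ) * z2^k)]
    apply Finset.sum_congr rfl
    intro k _
    exact term_eq l m j k (lt_of_lt_of_le j.isLt haA) (lt_of_lt_of_le k.isLt hbB)
  rw [hfact] at h
  rcases mul_eq_zero.1 h with h1 | h2
  · left
    obtain ⟨hd, hnd⟩ := geom_exp_zero hA ha _ h1
    exact ⟨(zmod_dvd_iff a l.1 m.1).1 hd, fun he => hnd ((zmod_dvd_iff' l.1 m.1).2 he)⟩
  · right
    obtain ⟨hd, hnd⟩ := geom_exp_zero hB hb _ h2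
    exact ⟨(zmod_dvd_iff b l.2 m.2).1 hd, fun he => hnd ((zmod_dvd_iff' l.2 m.2).2 he)⟩

lemma sep_lemma {N c : ℕ} [NeZero N] (hc : 0 < c) (hcN : c ∣ N) (r r' : ℕ)
    (hr : r < N / c) (hr' : r' < N / c)
    (h : (c : ZMod N) * ((r : ZMod N) - (r' : ZMod N)) = 0) :
    (r : ZMod N) = (r' : ZMod N) := by
  have hN : 0 < N := Nat.pos_of_ne_zero (NeZero.ne N)
  have hrN : r < N := lt_of_lt_of_le hr (Nat.div_le_self N c)
  have hr'N : r' < N := lt_of_lt_of_le hr' (Nat.div_le_self N c)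
  rw [← zmod_dvd_iff] at h
  rw [ZMod.val_cast_of_lt hrN, ZMod.val_cast_of_lt hr'N] at h
  have habs : |((r:ℤ) - r') * c| < N := by
    rw [abs_mul]
    have h1 : |(r:ℤ) - r'| < (N/c : ℕ) := by
      rw [abs_sub_lt_iff]
      constructor <;> [skip; skip] <;> push_cast <;> omega
    have h2 : |(c:ℤ)| = c := by simp
    calc |(r:ℤ) - r'| * |(c:ℤ)| < (N/c : ℕ) * |(c:ℤ)| := by
          apply mul_lt_mul_of_pos_right h1
          simp [hc]
    _ = ((N/c) * c : ℕ) := by rw [h2]; push_cast; ring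
    _ = (N:ℤ) := by rw [Nat.div_mul_cancel hcN]
  have := Int.eq_zero_of_abs_lt_dvd h habs
  have hrr : (r:ℤ) = r' := by
    have hcz : (c:ℤ) ≠ 0 := by exact_mod_cast hc.ne'
    have := mul_eq_zero.1 this
    rcases this with h' | h'
    · linarith [sub_eq_zero.1 h']
    · exact absurd h' hcz
  have : r = r' := by exact_mod_cast hrr
  rw [this]

/-- If the cube `[a]×[b]` has a spectrum `Λ`, then `a ∣ A`, `b ∣ B`, and the dual cube
`[A/a]×[B/b]` tiles `ℤ_A × ℤ_B` with translates `Λ`. -/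
theorem spectrum_implies_dual_tiling (A B a b : ℕ) [NeZero A] [NeZero B]
    (ha : 0 < a) (hb : 0 < b) (haA : a ≤ A) (hbB : b ≤ B)
    (L : Finset (ZMod A × ZMod B)) (hspec : IsSpectrum2 A B (cube2 A B a b) L) :
    a ∣ A ∧ b ∣ B ∧ Tiles (cube2 A B (A / a) (B / b)) L := by
  have hA : 0 < A := Nat.pos_of_ne_zero (NeZero.ne A)
  have hB : 0 < B := Nat.pos_of_ne_zero (NeZero.ne B)
  have hcond : ∀ l ∈ L, ∀ m ∈ L, l ≠ m →
      ((a : ZMod A) * (l.1 - m.1) = 0 ∧ l.1 ≠ m.1) ∨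
      ((b : ZMod B) * (l.2 - m.2) = 0 ∧ l.2 ≠ m.2) := by
    intro l hl m hm hlm
    exact orth_cond ha hb haA hbB l m (hspec.2 l hl m hm hlm)
  have hcardL : L.card = a * b := hspec.1.trans (cube2_card haA hbB)
  have hbound := spectrum_card_bound a b L hcond
  rw [torsion_card a ha, torsion_card b hb, hcardL] at hbound
  have hga : Nat.gcd a A ≤ a := Nat.le_of_dvd ha (Nat.gcd_dvd_left a A)
  have hgb : Nat.gcd b B ≤ b := Nat.le_of_dvd hb (Nat.gcd_dvd_left b B)
  have hgapos : 0 < Nat.gcd a A := Nat.gcd_pos_of_pos_left A ha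
  have hgbpos : 0 < Nat.gcd b B := Nat.gcd_pos_of_pos_left B hb
  have hgaeq : Nat.gcd a A = a := by nlinarith
  have hgbeq : Nat.gcd b B = b := by nlinarith
  have hadvd : a ∣ A := hgaeq ▸ Nat.gcd_dvd_right a A
  have hbdvd : b ∣ B := hgbeq ▸ Nat.gcd_dvd_right b B
  refine ⟨hadvd, hbdvd, ?_⟩
  -- tiling
  have haA' : A / a ≤ A := Nat.div_le_self A a
  have hbB' : B / b ≤ B := Nat.div_le_self B b
  set Q := cube2 A B (A / a) (B / b) with hQ
  set s : Finset ((ZMod A × ZMod B) × (ZMod A × ZMod B)) := Q ×ˢ L with hs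
  -- key separation
  have hsep1 : ∀ q q' : ZMod A × ZMod B, q ∈ Q → q' ∈ Q →
      ((a : ZMod A) * (q.1 - q'.1) = 0 → q.1 = q'.1) ∧
      ((b : ZMod B) * (q.2 - q'.2) = 0 → q.2 = q'.2) := by
    intro q q' hq hq'
    rw [hQ, cube2, Finset.mem_image] at hq hq'
    obtain ⟨v, _, rfl⟩ := hq
    obtain ⟨w, _, rfl⟩ := hq'
    constructor
    · intro h
      exact sep_lemma ha hadvd _ _ v.1.isLt w.1.isLt h
    · intro h
      exact sep_lemma hb hbdvd _ _ v.2.isLt w.2.isLt h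
  have hinj : Set.InjOn (fun p : (ZMod A × ZMod B) × (ZMod A × ZMod B) => p.1 + p.2)
      (s : Set ((ZMod A × ZMod B) × (ZMod A × ZMod B))) := by
    intro p hp q hq hpq
    simp only [Finset.coe_mem, Finset.mem_coe, hs, Finset.mem_product] at hp hq
    simp only at hpq
    by_cases h2 : p.2 = q.2
    · have h1 : p.1 = q.1 := by
        have := hpq
        rw [h2] at this
        exact add_right_cancel this
      exact Prod.ext h1 h2
    · exfalso
      have hd1 : p.1.1 - q.1.1 = q.2.1 - p.2.1 := by
        have := congrArg Prod.fst hpq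
        simp only [Prod.fst_add] at this
        linear_combination this
      have hd2 : p.1.2 - q.1.2 = q.2.2 - p.2.2 := by
        have := congrArg Prod.snd hpq
        simp only [Prod.snd_add] at this
        linear_combination this
      rcases hcond p.2 hp.2 q.2 hq.2 h2 with ⟨ht, hne⟩ | ⟨ht, hne⟩
      · have : (a : ZMod A) * (p.1.1 - q.1.1) = 0 := by
          rw [hd1]
          have : q.2.1 - p.2.1 = -(p.2.1 - q.2.1) := by ring
          rw [this, mul_neg, ht, neg_zero]
        have heq1 := (hsep1 p.1 q.1 hp.1 hq.1).1 this
        apply hne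
        have h0 : q.2.1 - p.2.1 = 0 := by
          have := hd1
          rw [heq1] at this
          simp only [sub_self] at this
          linear_combination -this
        exact (sub_eq_zero.1 h0).symm
      · have : (b : ZMod B) * (p.1.2 - q.1.2) = 0 := by
          rw [hd2]
          have : q.2.2 - p.2.2 = -(p.2.2 - q.2.2) := by ring
          rw [this, mul_neg, ht, neg_zero]
        have heq2 := (hsep1 p.1 q.1 hp.1 hq.1).2 this
        apply hne
        have h0 : q.2.2 - p.2.2 = 0 := by
          have := hd2
          rw [heq2] at this
          simp only [sub_self] at this
          linear_combination -this
        exact (sub_eq_zero.1 h0).symm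
  have hscard : s.card = A * B := by
    rw [hs, Finset.card_product, hQ, cube2_card haA' hbB', hcardL]
    rw [mul_mul_mul_comm, Nat.div_mul_cancel hadvd, Nat.div_mul_cancel hbdvd]
  have himgcard : (s.image (fun p : (ZMod A × ZMod B) × (ZMod A × ZMod B) => p.1 + p.2)).card
      = A * B := by
    rw [Finset.card_image_of_injOn hinj, hscard]
  have himg : s.image (fun p : (ZMod A × ZMod B) × (ZMod A × ZMod B) => p.1 + p.2)
      = Finset.univ := by
    apply Finset.eq_univ_of_card
    rw [himgcard, Fintype.card_prod, ZMod.card, ZMod.card]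
  intro x
  have hx : x ∈ s.image (fun p : (ZMod A × ZMod B) × (ZMod A × ZMod B) => p.1 + p.2) := by
    rw [himg]; exact Finset.mem_univ x
  obtain ⟨p, hp, hfp⟩ := Finset.mem_image.1 hx
  have hpmem := Finset.mem_product.1 hp
  refine ⟨p, ⟨hpmem.1, hpmem.2, hfp.symm⟩, ?_⟩
  rintro q ⟨hq1, hq2, hq3⟩
  have hqs : q ∈ s := Finset.mem_product.2 ⟨hq1, hq2⟩
  apply hinj hqs hp
  simp only
  rw [← hq3, hfp]
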